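/- Let F be a finitely generated free group, Φ : F → F an automorphism, and H a finitely generated subgroup of F with Φ(H) ⊆ H. Then Φ(H) = H; in particular the restriction of Φ to H is an automorphism of H. -/

import Mathlib

open Classical in
/-- Any partial bijection of a finite set (restriction of a global bijection)
extends to a permutation of the finite set. -/
lemma exists_perm_extend {γ : Type*} (T : Finset γ) (μ : Equiv.Perm γ) :
    ∃ σ : Equiv.Perm {y // y ∈ T}, ∀ (y : γ) (hy : y ∈ T), μ y ∈ T →
      (σ ⟨y, hy⟩ : γ) = μ y := by
  classical
  set β := {y // y ∈ T}
  let A : Set β := {p | μ (p : γ) ∈ T}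
  let B : Set β := {p | μ.symm (p : γ) ∈ T}
  let e1 : A ≃ B :=
    { toFun := fun p => ⟨⟨μ (p : β), p.2⟩, by simp [B]⟩
      invFun := fun q => ⟨⟨μ.symm (q : β), q.2⟩, by simp [A, (q : β).2]⟩
      left_inv := by rintro ⟨⟨y, hy⟩, hp⟩; simp
      right_inv := by rintro ⟨⟨y, hy⟩, hq⟩; simp }
  have hcard : Fintype.card ↥(Aᶜ) = Fintype.card ↥(Bᶜ) := by
    rw [Fintype.card_compl_set, Fintype.card_compl_set, Fintype.card_congr e1]
  obtain ⟨e2⟩ := Fintype.card_eq.mp hcard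
  refine ⟨((Equiv.Set.sumCompl A).symm.trans ((e1.sumCongr e2).trans
      (Equiv.Set.sumCompl B))), ?_⟩
  intro y hy hy'
  have hmem : (⟨y, hy⟩ : β) ∈ A := hy'
  simp only [Equiv.trans_apply]
  rw [Equiv.Set.sumCompl_symm_apply_of_mem hmem]
  simp [e1]

/-- M. Hall's separability statement, in the form of a finite permutation
representation separating a finitely generated subgroup from an element. -/
lemma hall_sep (n : ℕ) (H' : Subgroup (FreeGroup (Fin n)))
    (S : Finset (FreeGroup (Fin n)))
    (hS : Subgroup.closure (S : Set (FreeGroup (Fin n))) = H')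
    (x : FreeGroup (Fin n)) (hx : x ∉ H') :
    ∃ (α : Type) (_ : Fintype α) (π : FreeGroup (Fin n) →* Equiv.Perm α) (pt : α),
      (∀ g ∈ H', π g pt = pt) ∧ π x pt ≠ pt := by
  classical
  -- the finite set of suffix elements
  let D : Finset (FreeGroup (Fin n)) := (insert x S).biUnion
    (fun s => (s.toWord.tails.map FreeGroup.mk).toFinset)
  have memD : ∀ s ∈ insert x S, ∀ t, t <:+ s.toWord → FreeGroup.mk t ∈ D := by
    intro s hs t ht
    refine Finset.mem_biUnion.mpr ⟨s, hs, ?_⟩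
    simp only [List.mem_toFinset, List.mem_map]
    exact ⟨t, (List.mem_tails _ _).mpr ht, rfl⟩
  have honeD : (1 : FreeGroup (Fin n)) ∈ D := by
    rw [FreeGroup.one_eq_mk]
    exact memD x (Finset.mem_insert_self x S) [] List.nil_suffix
  let T : Finset (FreeGroup (Fin n) ⧸ H') :=
    D.image (QuotientGroup.mk : FreeGroup (Fin n) → FreeGroup (Fin n) ⧸ H')
  have memT : ∀ g : FreeGroup (Fin n), g ∈ D →
      (QuotientGroup.mk g : FreeGroup (Fin n) ⧸ H') ∈ T := by
    intro g hg; exact Finset.mem_image.mpr ⟨g, hg, rfl⟩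
  let α := {y // y ∈ T}
  -- the permutations
  have hσ : ∀ i : Fin n, ∃ σ : Equiv.Perm α,
      ∀ (y : FreeGroup (Fin n) ⧸ H') (hy : y ∈ T),
        MulAction.toPerm (FreeGroup.of i) y ∈ T →
        (σ ⟨y, hy⟩ : FreeGroup (Fin n) ⧸ H') = MulAction.toPerm (FreeGroup.of i) y :=
    fun i => exists_perm_extend T (MulAction.toPerm (FreeGroup.of i))
  choose σ hσspec using hσ
  let π : FreeGroup (Fin n) →* Equiv.Perm α := FreeGroup.lift σ
  let pt : α := ⟨(QuotientGroup.mk (1 : FreeGroup (Fin n)) : FreeGroup (Fin n) ⧸ H'),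
    memT 1 honeD⟩
  -- key computation
  have key : ∀ l : List (Fin n × Bool), (∀ t, t <:+ l → FreeGroup.mk t ∈ D) →
      ((π (FreeGroup.mk l)) pt : FreeGroup (Fin n) ⧸ H')
        = QuotientGroup.mk (FreeGroup.mk l) := by
    intro l
    induction l with
    | nil =>
      intro _
      rw [← FreeGroup.one_eq_mk, map_one]
      rfl
    | cons a l ih =>
      intro hsuf
      obtain ⟨i, b⟩ := a
      have hsuf' : ∀ t, t <:+ l → FreeGroup.mk t ∈ D := fun t ht =>
        hsuf t (ht.trans (List.suffix_cons _ _))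
      have hl : FreeGroup.mk ((i, b) :: l) = FreeGroup.mk [(i, b)] * FreeGroup.mk l := by
        rw [FreeGroup.mul_mk]; rfl
      have hc : ((π (FreeGroup.mk l)) pt : FreeGroup (Fin n) ⧸ H')
          = QuotientGroup.mk (FreeGroup.mk l) := ih hsuf'
      have hcmem : (QuotientGroup.mk (FreeGroup.mk l) : FreeGroup (Fin n) ⧸ H') ∈ T :=
        memT _ (hsuf' l (List.suffix_refl l))
      have hcpt : (π (FreeGroup.mk l)) pt = ⟨QuotientGroup.mk (FreeGroup.mk l), hcmem⟩ :=
        Subtype.ext hc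
      rw [hl, map_mul, Equiv.Perm.mul_apply, hcpt]
      have hwholemem : FreeGroup.mk ((i, b) :: l) ∈ D :=
        hsuf _ (List.suffix_refl _)
      cases b with
      | true =>
        have hof : FreeGroup.mk [(i, true)] = FreeGroup.of i := rfl
        have hmul : FreeGroup.of i * FreeGroup.mk l = FreeGroup.mk ((i, true) :: l) := by
          rw [← hof, FreeGroup.mul_mk]; rfl
        have hsm : MulAction.toPerm (FreeGroup.of i)
            (QuotientGroup.mk (FreeGroup.mk l) : FreeGroup (Fin n) ⧸ H')
            = QuotientGroup.mk (FreeGroup.mk ((i, true) :: l)) :=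
          congrArg QuotientGroup.mk hmul
        have hin : MulAction.toPerm (FreeGroup.of i)
            (QuotientGroup.mk (FreeGroup.mk l) : FreeGroup (Fin n) ⧸ H') ∈ T := by
          rw [hsm]; exact memT _ hwholemem
        rw [hof, show π (FreeGroup.of i) = σ i from FreeGroup.lift_apply_of]
        rw [hσspec i _ hcmem hin, hsm]
        exact congrArg QuotientGroup.mk hmul.symm
      | false =>
        have hofinv : FreeGroup.mk [(i, false)] = (FreeGroup.of i)⁻¹ := by
          have h1 : (FreeGroup.of i)⁻¹ = FreeGroup.mk (FreeGroup.invRev [(i, true)]) := by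
            rw [← FreeGroup.inv_mk]; rfl
          rw [h1]; rfl
        have hwmem : (QuotientGroup.mk (FreeGroup.mk ((i, false) :: l))
            : FreeGroup (Fin n) ⧸ H') ∈ T := memT _ hwholemem
        have hmul : FreeGroup.of i * FreeGroup.mk ((i, false) :: l) = FreeGroup.mk l := by
          have hsplit : FreeGroup.mk ((i, false) :: l)
              = FreeGroup.mk [(i, false)] * FreeGroup.mk l := by
            rw [FreeGroup.mul_mk]; rfl
          rw [hsplit, hofinv, ← mul_assoc, mul_inv_cancel, one_mul]
        have hsm : MulAction.toPerm (FreeGroup.of i)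
            (QuotientGroup.mk (FreeGroup.mk ((i, false) :: l)) : FreeGroup (Fin n) ⧸ H')
            = QuotientGroup.mk (FreeGroup.mk l) :=
          congrArg QuotientGroup.mk hmul
        have hin : MulAction.toPerm (FreeGroup.of i)
            (QuotientGroup.mk (FreeGroup.mk ((i, false) :: l))
              : FreeGroup (Fin n) ⧸ H') ∈ T := by
          rw [hsm]; exact hcmem
        have hstep : σ i ⟨QuotientGroup.mk (FreeGroup.mk ((i, false) :: l)), hwmem⟩
            = ⟨QuotientGroup.mk (FreeGroup.mk l), hcmem⟩ := by
          apply Subtype.ext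
          rw [hσspec i _ hwmem hin, hsm]
        have hπinv : π (FreeGroup.mk [(i, false)]) = (σ i)⁻¹ := by
          rw [hofinv, map_inv, show π (FreeGroup.of i) = σ i from FreeGroup.lift_apply_of]
        rw [hπinv, ← hstep, Equiv.Perm.inv_def, Equiv.symm_apply_apply]
        exact congrArg QuotientGroup.mk (by rw [FreeGroup.mul_mk]; rfl :
          FreeGroup.mk ((i, false) :: l) = FreeGroup.mk [(i, false)] * FreeGroup.mk l)
    -- end key
  have keyg : ∀ g : FreeGroup (Fin n), g ∈ insert x S →
      ((π g) pt : FreeGroup (Fin n) ⧸ H') = QuotientGroup.mk g := by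
    intro g hg
    have := key g.toWord (memD g hg)
    rwa [FreeGroup.mk_toWord] at this
  have hfix : ∀ g ∈ H', π g pt = pt := by
    intro g hg
    rw [← hS] at hg
    induction hg using Subgroup.closure_induction with
    | mem s hs =>
      apply Subtype.ext
      rw [keyg s (Finset.mem_insert_of_mem (Finset.mem_coe.mp hs))]
      have hsH : s ∈ H' := hS ▸ Subgroup.subset_closure hs
      show _ = (QuotientGroup.mk (1 : FreeGroup (Fin n)) : FreeGroup (Fin n) ⧸ H')
      exact QuotientGroup.eq.mpr (by simpa using inv_mem hsH)
    | one => rw [map_one]; rfl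
    | mul a c _ _ ha hc => rw [map_mul, Equiv.Perm.mul_apply, hc, ha]
    | inv a _ ha =>
      rw [map_inv]
      nth_rewrite 1 [← ha]
      exact Equiv.symm_apply_apply _ _
  have hne : π x pt ≠ pt := by
    intro hEq
    have hcoe : ((π x) pt : FreeGroup (Fin n) ⧸ H') = QuotientGroup.mk x :=
      keyg x (Finset.mem_insert_self x S)
    rw [hEq] at hcoe
    have hq : (QuotientGroup.mk x : FreeGroup (Fin n) ⧸ H')
        = QuotientGroup.mk (1 : FreeGroup (Fin n)) := hcoe.symm
    have hxH : x ∈ H' := by simpa using QuotientGroup.eq.mp hq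
    exact hx hxH
  exact ⟨α, inferInstance, π, pt, hfix, hne⟩

/-- **Scott's lemma** (Lemma 6.0.6): if `Φ` is an automorphism of a finitely generated
free group `F` and `H` is a finitely generated subgroup with `Φ(H) ⊆ H`,
then `Φ(H) = H`; in particular the restriction of `Φ` to `H` is an automorphism of `H`. -/
theorem stmt0 (n : ℕ) (Φ : FreeGroup (Fin n) ≃* FreeGroup (Fin n))
    (H : Subgroup (FreeGroup (Fin n))) (hfg : H.FG)
    (hsub : H.map Φ.toMonoidHom ≤ H) :
    H.map Φ.toMonoidHom = H ∧
      ∃ e : H ≃* H, ∀ h : H, (e h : FreeGroup (Fin n)) = Φ (h : FreeGroup (Fin n)) := by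
  classical
  let A : MulAut (FreeGroup (Fin n)) := Φ
  -- powers of Φ preserve H
  have hpow_mem : ∀ (k : ℕ) (g : FreeGroup (Fin n)), g ∈ H → (A ^ k) g ∈ H := by
    intro k
    induction k with
    | zero => intro g hg; simpa using hg
    | succ m ih =>
      intro g hg
      have hAk : (A ^ (m + 1)) g = (A ^ m) (A g) := by
        rw [pow_succ, MulAut.mul_apply]
      rw [hAk]
      exact ih _ (hsub ⟨g, hg, rfl⟩)
  have hmapeq : H.map Φ.toMonoidHom = H := by
    refine le_antisymm hsub ?_
    intro h hh
    by_contra hnot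
    -- the image subgroup is finitely generated
    obtain ⟨S, hSH⟩ := hfg
    have hfgmap : Subgroup.closure ((S.image Φ : Finset (FreeGroup (Fin n)))
        : Set (FreeGroup (Fin n))) = H.map Φ.toMonoidHom := by
      rw [Finset.coe_image]
      have hcl := MonoidHom.map_closure Φ.toMonoidHom (S : Set (FreeGroup (Fin n)))
      rw [hSH, MulEquiv.coe_toMonoidHom] at hcl
      exact hcl.symm
    obtain ⟨α, hα, π, pt, hfix, hne⟩ :=
      hall_sep n (H.map Φ.toMonoidHom) (S.image Φ) hfgmap h hnot
    -- finitely many homomorphisms to a finite permutation group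
    have hfin : Finite (FreeGroup (Fin n) →* Equiv.Perm α) := by
      have hinj : Function.Injective
          (fun (f : FreeGroup (Fin n) →* Equiv.Perm α) =>
            (fun i : Fin n => f (FreeGroup.of i))) := by
        intro f g hfg'
        exact FreeGroup.ext_hom f g fun a => congrFun hfg' a
      exact Finite.of_injective _ hinj
    -- pigeonhole
    obtain ⟨a, b, hab, hEq⟩ := Finite.exists_ne_map_eq_of_infinite
      (fun k : ℕ => π.comp ((A ^ k) : MulAut (FreeGroup (Fin n))).toMonoidHom)
    have main : ∀ a b : ℕ, a < b →
        π.comp ((A ^ a) : MulAut (FreeGroup (Fin n))).toMonoidHom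
          = π.comp ((A ^ b) : MulAut (FreeGroup (Fin n))).toMonoidHom → False := by
      intro a b hlt hEq
      have hk : ∀ g : FreeGroup (Fin n), π ((A ^ (b - a)) g) = π g := by
        intro g
        have h1 : π ((A ^ b) (((A ^ a)⁻¹ : MulAut (FreeGroup (Fin n))) g))
            = π ((A ^ a) (((A ^ a)⁻¹ : MulAut (FreeGroup (Fin n))) g)) := by
          have h0 := congrArg (fun f : FreeGroup (Fin n) →* Equiv.Perm α =>
            f (((A ^ a)⁻¹ : MulAut (FreeGroup (Fin n))) g)) hEq
          simpa using h0.symm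
        have h2 : (A ^ a) (((A ^ a)⁻¹ : MulAut (FreeGroup (Fin n))) g) = g := by
          rw [← MulAut.mul_apply, mul_inv_cancel, MulAut.one_apply]
        have h3 : (A ^ b) (((A ^ a)⁻¹ : MulAut (FreeGroup (Fin n))) g)
            = (A ^ (b - a)) g := by
          rw [← MulAut.mul_apply, ← pow_sub A (le_of_lt hlt)]
        rw [h2, h3] at h1
        exact h1
      have hk1 : 1 ≤ b - a := Nat.one_le_iff_ne_zero.mpr (Nat.sub_ne_zero_of_lt hlt)
      have hmem : (A ^ (b - a)) h ∈ H.map Φ.toMonoidHom := by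
        obtain ⟨m, hm⟩ := Nat.exists_eq_add_of_le hk1
        rw [hm, add_comm, pow_succ', MulAut.mul_apply]
        exact ⟨(A ^ m) h, hpow_mem m h hh, rfl⟩
      have hfixed := hfix _ hmem
      rw [hk h] at hfixed
      exact hne hfixed
    rcases Nat.lt_or_ge a b with hlt | hge
    · exact main a b hlt hEq
    · rcases Nat.lt_or_ge b a with hlt' | hge'
      · exact main b a hlt' hEq.symm
      · exact hab (Nat.le_antisymm hge' hge)
  refine ⟨hmapeq, ?_⟩
  have hmapeq' : H.map (Φ : FreeGroup (Fin n) →* FreeGroup (Fin n)) = H := hmapeq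
  refine ⟨(MulEquiv.subgroupMap Φ H).trans (MulEquiv.subgroupCongr hmapeq'), ?_⟩
  intro h
  rw [MulEquiv.trans_apply, MulEquiv.subgroupCongr_apply]
  exact MulEquiv.coe_subgroupMap_apply Φ H h
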